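/- Let L_m be the (m+1)×(m+1) skew-symmetric matrix satisfying γ_m' = L_m γ_m for γ_m(s)_j = sqrt(C(m,j)) cos^{m−j}(s) sin^j(s). Then the eigenvalues of L_m are {±(m−2j)i : 0 ≤ j ≤ ⌊m/2⌋}; i.e., for m = 2k they are 0, ±2i, ±4i, …, ±2ki, and for m = 2k+1 they are ±i, ±3i, …, ±(2k+1)i, all distinct. -/

import Mathlib

open Polynomial in
lemma aux_indep (m : ℕ) (c : Fin (m+1) → ℂ)
    (h : ∀ s : ℝ, ∑ k : Fin (m+1),
      c k * (Real.cos s : ℂ) ^ (m - (k:ℕ)) * (Real.sin s : ℂ) ^ (k:ℕ) = 0) :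
    ∀ k, c k = 0 := by
  classical
  set Q : ℂ[X] := ∑ k : Fin (m+1), monomial (k : ℕ) (c k) with hQ
  have hcoeff : ∀ k : Fin (m+1), Q.coeff (k : ℕ) = c k := by
    intro k
    rw [hQ, finset_sum_coeff]
    rw [Finset.sum_eq_single k]
    · simp
    · intro b _ hb
      rw [coeff_monomial, if_neg (by simpa [Fin.ext_iff] using hb)]
    · simp
  have heval : ∀ x : ℝ, Q.eval (x : ℂ) = 0 := by
    intro x
    have hs := h (Real.arctan x)
    have hc : Real.sin (Real.arctan x) = x * Real.cos (Real.arctan x) := by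
      have h1 := Real.tan_arctan x
      rw [Real.tan_eq_sin_div_cos] at h1
      exact (div_eq_iff (Real.cos_arctan_pos x).ne').mp h1
    have ha : (Real.cos (Real.arctan x) : ℂ) ≠ 0 := by
      exact_mod_cast Complex.ofReal_ne_zero.2 (Real.cos_arctan_pos x).ne'
    rw [hc] at hs
    simp only [Complex.ofReal_mul] at hs
    have : ∑ k : Fin (m+1), c k * (Real.cos (Real.arctan x) : ℂ) ^ (m - (k:ℕ)) *
        ((x : ℂ) * (Real.cos (Real.arctan x) : ℂ)) ^ (k:ℕ)
        = (Real.cos (Real.arctan x) : ℂ) ^ m * Q.eval (x : ℂ) := by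
      rw [hQ]
      rw [eval_finset_sum, Finset.mul_sum]
      refine Finset.sum_congr rfl fun k _ => ?_
      have hk : (k : ℕ) ≤ m := Nat.lt_succ_iff.mp k.isLt
      rw [eval_monomial, mul_pow]
      rw [show (Real.cos (Real.arctan x) : ℂ) ^ m =
        (Real.cos (Real.arctan x) : ℂ) ^ (m - (k:ℕ)) *
        (Real.cos (Real.arctan x) : ℂ) ^ (k:ℕ) by
          rw [← pow_add, Nat.sub_add_cancel hk]]
      ring
    rw [this] at hs
    exact (mul_eq_zero.mp hs).resolve_left (pow_ne_zero _ ha)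
  have hQ0 : Q = 0 := by
    apply Polynomial.eq_zero_of_infinite_isRoot
    apply Set.Infinite.mono (s := Set.range (fun x : ℝ => (x : ℂ)))
    · rintro _ ⟨x, rfl⟩; exact heval x
    · exact Set.infinite_range_of_injective Complex.ofReal_injective
  intro k
  rw [← hcoeff k, hQ0, coeff_zero]
open Polynomial Complex in
lemma aux_homog (m t : ℕ) (ht : t ≤ m) (x y : ℂ) :
    ∑ p ∈ Finset.range (m+1),
      (((1 + C I * X) ^ (m - t) * (1 - C I * X) ^ t : ℂ[X]).coeff p) * x ^ (m - p) * y ^ p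
      = (x + I * y) ^ (m - t) * (x - I * y) ^ t := by
  classical
  set P : ℂ[X] := (1 + C I * X) ^ (m - t) * (1 - C I * X) ^ t with hP
  have hdeg : P.natDegree < m + 1 := by
    have h1 : (1 + C I * X : ℂ[X]).natDegree ≤ 1 := by
      apply (natDegree_add_le _ _).trans
      simp [natDegree_C_mul_le]
    have h2 : (1 - C I * X : ℂ[X]).natDegree ≤ 1 := by
      apply (natDegree_sub_le _ _).trans
      simp [natDegree_C_mul_le]
    have := natDegree_mul_le (p := (1 + C I * X : ℂ[X]) ^ (m - t)) (q := (1 - C I * X : ℂ[X]) ^ t)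
    refine Nat.lt_succ_of_le (this.trans ?_)
    have h3 := (natDegree_pow_le (p := (1 + C I * X : ℂ[X])) (n := m - t)).trans
      (Nat.mul_le_mul_left _ h1)
    have h4 := (natDegree_pow_le (p := (1 - C I * X : ℂ[X])) (n := t)).trans
      (Nat.mul_le_mul_left _ h2)
    omega
  have hPeval : ∀ z : ℂ, P.eval z = (1 + I * z) ^ (m - t) * (1 - I * z) ^ t := by
    intro z; simp [hP]
  set A : ℂ[X] := ∑ p ∈ Finset.range (m+1), C (P.coeff p * y ^ p) * X ^ (m - p) with hA
  set B : ℂ[X] := (X + C (I * y)) ^ (m - t) * (X - C (I * y)) ^ t with hB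
  have hAeval : ∀ z : ℂ, A.eval z = ∑ p ∈ Finset.range (m+1),
      P.coeff p * y ^ p * z ^ (m - p) := by
    intro z; simp [hA, eval_finset_sum]
  have hBeval : ∀ z : ℂ, B.eval z = (z + I * y) ^ (m - t) * (z - I * y) ^ t := by
    intro z; simp [hB]
  have hAB : A = B := by
    apply Polynomial.eq_of_infinite_eval_eq
    apply Set.Infinite.mono (s := {z : ℂ | z ≠ 0})
    · intro z hz
      have hz : z ≠ 0 := hz
      show A.eval z = B.eval z
      rw [hAeval, hBeval]
      have step1 : ∀ p ∈ Finset.range (m+1),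
          P.coeff p * y ^ p * z ^ (m - p) = z ^ m * (P.coeff p * (y / z) ^ p) := by
        intro p hp
        have hpm : p ≤ m := Nat.lt_succ_iff.mp (Finset.mem_range.mp hp)
        rw [pow_sub₀ z hz hpm, div_pow]
        field_simp
      rw [Finset.sum_congr rfl step1, ← Finset.mul_sum]
      have hsum : ∑ p ∈ Finset.range (m+1), P.coeff p * (y / z) ^ p = P.eval (y / z) :=
        (Polynomial.eval_eq_sum_range' hdeg _).symm
      rw [hsum, hPeval]
      have hz1 : z * (1 + I * (y/z)) = z + I * y := by field_simp
      have hz2 : z * (1 - I * (y/z)) = z - I * y := by field_simp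
      rw [← hz1, ← hz2, mul_pow, mul_pow,
        show z ^ m = z ^ (m - t) * z ^ t by rw [← pow_add, Nat.sub_add_cancel ht]]
      ring
    · exact Set.Finite.infinite_compl (Set.finite_singleton 0)
  have := congrArg (Polynomial.eval x) hAB
  rw [hAeval, hBeval] at this
  calc ∑ p ∈ Finset.range (m+1), P.coeff p * x ^ (m - p) * y ^ p
      = ∑ p ∈ Finset.range (m+1), P.coeff p * y ^ p * x ^ (m - p) :=
        Finset.sum_congr rfl fun p _ => by ring
    _ = (x + I * y) ^ (m - t) * (x - I * y) ^ t := this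

open Polynomial Complex in
/-- If `L` is a skew-symmetric matrix with `γ_m' = L γ_m`, where
`γ_m(s)_j = √(C(m,j)) cosᵐ⁻ʲ(s) sinʲ(s)`, then the eigenvalues of `L`
(i.e., the roots of the characteristic polynomial of its complexification,
with multiplicity) are exactly `(m − 2j)i` for `0 ≤ j ≤ m`, i.e.
`0, ±2i, …, ±2ki` when `m = 2k` and `±i, ±3i, …, ±(2k+1)i` when `m = 2k+1`,
each occurring once (so all eigenvalues are distinct). -/
theorem stmt17 (m : ℕ)
    (γ : ℝ → EuclideanSpace ℝ (Fin (m + 1)))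
    (hγ : ∀ (s : ℝ) (j : Fin (m + 1)),
      γ s j = Real.sqrt (m.choose j) * Real.cos s ^ (m - (j : ℕ)) * Real.sin s ^ (j : ℕ))
    (L : Matrix (Fin (m + 1)) (Fin (m + 1)) ℝ)
    (hskew : L.transpose = -L)
    (hode : ∀ s : ℝ, deriv γ s = Matrix.toEuclideanLin L (γ s)) :
    (L.map (Complex.ofReal)).charpoly.roots =
      (Multiset.range (m + 1)).map (fun j => ((m : ℂ) - 2 * (j : ℂ)) * Complex.I) := by
  classical
  set g : ℕ → ℝ → ℝ := fun p s =>
    Real.sqrt (m.choose p) * (Real.cos s ^ (m - p) * Real.sin s ^ p) with hgdef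
  set g' : ℕ → ℝ → ℝ := fun p s => Real.sqrt (m.choose p) *
      (((m - p : ℕ) * Real.cos s ^ (m - p - 1) * (-Real.sin s)) * Real.sin s ^ p +
       Real.cos s ^ (m - p) * ((p : ℝ) * Real.sin s ^ (p - 1) * Real.cos s)) with hg'def
  have hg : ∀ (p : ℕ) (s : ℝ), HasDerivAt (fun s => g p s) (g' p s) s := by
    intro p s
    exact (((Real.hasDerivAt_cos s).pow _).mul ((Real.hasDerivAt_sin s).pow _)).const_mul _
  -- γ in terms of g
  have hγeq : ∀ s : ℝ, γ s = (WithLp.equiv 2 (Fin (m+1) → ℝ)).symm (fun p => g p s) := by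
    intro s
    ext p
    rw [hγ s p]
    simp [hgdef, mul_assoc]
  -- derivative of γ
  have hder : ∀ s : ℝ, HasDerivAt γ
      ((WithLp.equiv 2 (Fin (m+1) → ℝ)).symm (fun p => g' p s)) s := by
    intro s
    have h1 : HasDerivAt (fun s : ℝ => (fun p : Fin (m+1) => g p s)) (fun p : Fin (m+1) => g' p s) s :=
      hasDerivAt_pi.mpr fun p => hg p s
    have h2 := ((PiLp.continuousLinearEquiv 2 ℝ (fun _ : Fin (m+1) => ℝ)).symm.toContinuousLinearMap).hasFDerivAt.comp_hasDerivAt s h1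
    have : γ = fun s => (WithLp.equiv 2 (Fin (m+1) → ℝ)).symm (fun p => g p s) := funext hγeq
    rw [this]
    exact h2
  -- the key linear identity
  have hA : ∀ (s : ℝ) (p : Fin (m+1)), (∑ k : Fin (m+1), L p k * g k s) = g' p s := by
    intro s p
    have h2 := hode s
    rw [(hder s).deriv] at h2
    have h3 := congrArg (fun v => WithLp.equiv 2 (Fin (m+1) → ℝ) v p) h2
    simp only [WithLp.equiv_apply, WithLp.equiv_symm_apply, WithLp.ofLp_toLp, Matrix.ofLp_toEuclideanLin_apply] at h3
    rw [hγeq s] at h3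
    simp only [WithLp.equiv_symm_apply, WithLp.ofLp_toLp] at h3
    simp only [Matrix.mulVec, dotProduct] at h3
    exact h3.symm
  -- eigenvectors
  have heig : ∀ t : ℕ, t ≤ m → ∃ v : Fin (m+1) → ℂ, v ≠ 0 ∧
      (L.map Complex.ofReal).mulVec v = (-(((m:ℂ) - 2*t) * I)) • v := by
    intro t ht
    set μ : ℂ := ((m:ℂ) - 2*t) * I with hμ
    set P : ℂ[X] := (1 + C I * X) ^ (m - t) * (1 - C I * X) ^ t with hP
    set v : Fin (m+1) → ℂ := fun p => P.coeff p / (Real.sqrt (m.choose p) : ℂ) with hv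
    have hsqrt : ∀ p : Fin (m+1), ((Real.sqrt (m.choose p) : ℝ) : ℂ) ≠ 0 := by
      intro p
      have h1 : 0 < Real.sqrt (m.choose p) :=
        Real.sqrt_pos.mpr (by exact_mod_cast Nat.choose_pos (Nat.lt_succ_iff.mp p.isLt))
      exact_mod_cast h1.ne'
    have hv0 : v ≠ 0 := by
      intro hcontra
      have h0 : v 0 = 0 := congrFun hcontra 0
      rw [hv] at h0
      simp only [Fin.val_zero] at h0
      have hc0 : P.coeff 0 = 1 := by
        rw [Polynomial.coeff_zero_eq_eval_zero, hP]
        simp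
      rcases div_eq_zero_iff.mp h0 with h | h
      · rw [hc0] at h; exact one_ne_zero h
      · have := hsqrt 0
        rw [Fin.val_zero] at this
        exact this h
    -- w equals exp
    have key : ∀ s : ℝ, ∑ p : Fin (m+1), v p * ((g p s : ℝ) : ℂ) = Complex.exp (μ * s) := by
      intro s
      have step : ∀ p : Fin (m+1), v p * ((g p s : ℝ) : ℂ)
          = P.coeff p * ((Real.cos s : ℂ)) ^ (m - (p:ℕ)) * ((Real.sin s : ℂ)) ^ (p:ℕ) := by
        intro p
        rw [hv, hgdef]
        push_cast
        field_simp [hsqrt p]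
      rw [Finset.sum_congr rfl fun p _ => step p]
      have hrange : ∑ p : Fin (m+1),
          P.coeff p * ((Real.cos s : ℂ)) ^ (m - (p:ℕ)) * ((Real.sin s : ℂ)) ^ (p:ℕ)
          = ∑ p ∈ Finset.range (m+1),
            P.coeff p * ((Real.cos s : ℂ)) ^ (m - p) * ((Real.sin s : ℂ)) ^ p :=
        Fin.sum_univ_eq_sum_range
          (fun p => P.coeff p * ((Real.cos s : ℂ)) ^ (m - p) * ((Real.sin s : ℂ)) ^ p) (m+1)
      rw [hrange, hP]
      rw [aux_homog m t ht _ _]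
      rw [Complex.ofReal_cos, Complex.ofReal_sin]
      have e1 : Complex.cos s + I * Complex.sin s = Complex.exp (s * I) := by
        rw [Complex.exp_mul_I]; ring
      have e2 : Complex.cos s - I * Complex.sin s = Complex.exp (-(s : ℂ) * I) := by
        rw [Complex.exp_mul_I, Complex.cos_neg, Complex.sin_neg]; ring
      rw [e1, e2, ← Complex.exp_nat_mul, ← Complex.exp_nat_mul, ← Complex.exp_add]
      congr 1
      have : ((m - t : ℕ) : ℂ) = (m : ℂ) - t := by
        push_cast [Nat.cast_sub ht]; ring
      rw [this, hμ]
      ring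
    -- two derivative computations
    have E1 : ∀ s : ℝ, ∑ p : Fin (m+1), v p * ((g' p s : ℝ) : ℂ)
        = μ * ∑ p : Fin (m+1), v p * ((g p s : ℝ) : ℂ) := by
      intro s
      have keyS : HasDerivAt (fun s : ℝ => ∑ p : Fin (m+1), v p * ((g p s : ℝ) : ℂ))
          (∑ p : Fin (m+1), v p * ((g' p s : ℝ) : ℂ)) s :=
        HasDerivAt.fun_sum fun p _ => ((hg p s).ofReal_comp).const_mul (v p)
      have keyD : HasDerivAt (fun s : ℝ => Complex.exp (μ * s)) (μ * Complex.exp (μ * s)) s := by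
        have h0 : HasDerivAt (fun s : ℝ => μ * (s : ℂ)) μ s := by
          simpa using ((hasDerivAt_id s).ofReal_comp).const_mul μ
        simpa [mul_comm] using h0.cexp
      have hfun : (fun s : ℝ => ∑ p : Fin (m+1), v p * ((g p s : ℝ) : ℂ))
          = fun s : ℝ => Complex.exp (μ * s) := funext key
      have := (hfun ▸ keyS).unique keyD
      rw [this, key s]
    -- deduce eigen equation
    have hLv : ∀ k : Fin (m+1), (∑ p : Fin (m+1), ((L p k : ℝ) : ℂ) * v p) = μ * v k := by
      have hzero : ∀ s : ℝ, ∑ k : Fin (m+1),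
          (((∑ p : Fin (m+1), ((L p k : ℝ) : ℂ) * v p) - μ * v k)
            * ((Real.sqrt (m.choose k) : ℝ) : ℂ))
          * ((Real.cos s : ℂ)) ^ (m - (k:ℕ)) * ((Real.sin s : ℂ)) ^ (k:ℕ) = 0 := by
        intro s
        have hexp : ∀ k : Fin (m+1),
            (((∑ p : Fin (m+1), ((L p k : ℝ) : ℂ) * v p) - μ * v k)
              * ((Real.sqrt (m.choose k) : ℝ) : ℂ))
            * ((Real.cos s : ℂ)) ^ (m - (k:ℕ)) * ((Real.sin s : ℂ)) ^ (k:ℕ)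
            = ((∑ p : Fin (m+1), ((L p k : ℝ) : ℂ) * v p) - μ * v k) * ((g k s : ℝ) : ℂ) := by
          intro k
          rw [hgdef]
          push_cast
          ring
        rw [Finset.sum_congr rfl fun k _ => hexp k]
        have hg'c : ∀ p : Fin (m+1), ((g' p s : ℝ) : ℂ)
            = ∑ k : Fin (m+1), ((L p k : ℝ) : ℂ) * ((g k s : ℝ) : ℂ) := by
          intro p
          rw [← hA s p]
          push_cast
          rfl
        have swap : ∑ k : Fin (m+1),
            (∑ p : Fin (m+1), ((L p k : ℝ) : ℂ) * v p) * ((g k s : ℝ) : ℂ)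
            = ∑ p : Fin (m+1), v p * ((g' p s : ℝ) : ℂ) := by
          rw [Finset.sum_congr rfl (fun k _ => Finset.sum_mul _ _ _), Finset.sum_comm]
          refine Finset.sum_congr rfl fun p _ => ?_
          rw [hg'c p, Finset.mul_sum]
          exact Finset.sum_congr rfl fun k _ => by ring
        have expand : ∑ k : Fin (m+1),
            ((∑ p : Fin (m+1), ((L p k : ℝ) : ℂ) * v p) - μ * v k) * ((g k s : ℝ) : ℂ)
            = (∑ p : Fin (m+1), v p * ((g' p s : ℝ) : ℂ))
              - μ * ∑ k : Fin (m+1), v k * ((g k s : ℝ) : ℂ) := by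
          have e3 : ∑ k : Fin (m+1), μ * v k * ((g k s : ℝ) : ℂ)
              = μ * ∑ k : Fin (m+1), v k * ((g k s : ℝ) : ℂ) := by
            rw [Finset.mul_sum]
            exact Finset.sum_congr rfl fun k _ => by ring
          rw [Finset.sum_congr rfl (fun k _ => sub_mul _ _ _), Finset.sum_sub_distrib, swap, e3]
        rw [expand, E1 s, sub_self]
      have := aux_indep m _ hzero
      intro k
      have hk := this k
      rcases mul_eq_zero.mp hk with h | h
      · exact sub_eq_zero.mp h
      · exact absurd h (hsqrt k)
    refine ⟨v, hv0, ?_⟩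
    funext k
    have hskewk : ∀ p, L k p = - L p k := by
      intro p
      have h5 := congrFun (congrFun hskew p) k
      simp only [Matrix.transpose_apply, Matrix.neg_apply] at h5
      linarith
    have hmv : ((L.map Complex.ofReal).mulVec v) k
        = ∑ p : Fin (m+1), ((L k p : ℝ) : ℂ) * v p := by
      simp [Matrix.mulVec, dotProduct, Matrix.map_apply]
    rw [hmv]
    have h2 : ∑ p : Fin (m+1), ((L k p : ℝ) : ℂ) * v p
        = - ∑ p : Fin (m+1), ((L p k : ℝ) : ℂ) * v p := by
      rw [← Finset.sum_neg_distrib]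
      refine Finset.sum_congr rfl fun p _ => ?_
      rw [hskewk p]
      push_cast
      ring
    rw [h2, hLv k]
    simp [smul_eq_mul]
  -- final multiset argument
  set Mc := L.map Complex.ofReal with hMc
  have hmonic := Mc.charpoly_monic
  have hdeg : Mc.charpoly.natDegree = m + 1 := by
    rw [Mc.charpoly_natDegree_eq_dim, Fintype.card_fin]
  have hne : Mc.charpoly ≠ 0 := hmonic.ne_zero
  have hroot : ∀ j : ℕ, j < m + 1 → Mc.charpoly.IsRoot (((m:ℂ) - 2*j) * I) := by
    intro j hj
    obtain ⟨v, hv0, hvL⟩ := heig (m - j) (Nat.sub_le m j)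
    set μ : ℂ := ((m:ℂ) - 2*j) * I with hμ
    have hμeq : (-(((m:ℂ) - 2*((m - j : ℕ) : ℂ)) * I)) = μ := by
      rw [hμ, Nat.cast_sub (Nat.lt_succ_iff.mp hj)]
      ring
    rw [hμeq] at hvL
    have hker : ((Matrix.scalar (Fin (m+1)) μ) - Mc).mulVec v = 0 := by
      rw [Matrix.sub_mulVec, hvL]
      funext k
      simp [Matrix.scalar_apply, Matrix.mulVec_diagonal, smul_eq_mul]
    have hdet := Matrix.exists_mulVec_eq_zero_iff.mp ⟨v, hv0, hker⟩
    have heval : Mc.charpoly.eval μ = ((Matrix.scalar (Fin (m+1)) μ) - Mc).det := by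
      rw [Matrix.charpoly, eval_det, Matrix.matPolyEquiv_charmatrix,
        Polynomial.eval_sub, Polynomial.eval_X, Polynomial.eval_C]
    rw [Polynomial.IsRoot, heval]
    exact hdet
  have hinj : Function.Injective (fun j : ℕ => ((m:ℂ) - 2*(j:ℂ)) * I) := by
    intro a b hab
    simp only at hab
    have h1 := mul_right_cancel₀ Complex.I_ne_zero hab
    have h2 : (a : ℂ) = b := by linear_combination (-(1:ℂ)/2) * h1
    exact_mod_cast h2
  have hnodup : ((Multiset.range (m+1)).map
      (fun j : ℕ => ((m:ℂ) - 2*(j:ℂ)) * I)).Nodup :=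
    Multiset.Nodup.map hinj (Multiset.nodup_range _)
  have hcardR : Multiset.card Mc.charpoly.roots = Mc.charpoly.natDegree :=
    Polynomial.splits_iff_card_roots.mp (IsAlgClosed.splits _)
  have hle : (Multiset.range (m+1)).map (fun j : ℕ => ((m:ℂ) - 2*(j:ℂ)) * I)
      ≤ Mc.charpoly.roots := by
    rw [Multiset.le_iff_count]
    intro a
    by_cases ha : a ∈ (Multiset.range (m+1)).map (fun j : ℕ => ((m:ℂ) - 2*(j:ℂ)) * I)
    · rw [Multiset.count_eq_one_of_mem hnodup ha]
      obtain ⟨j, hj, rfl⟩ := Multiset.mem_map.mp ha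
      rw [Multiset.mem_range] at hj
      exact Multiset.one_le_count_iff_mem.mpr
        (Polynomial.mem_roots'.mpr ⟨hne, hroot j hj⟩)
    · rw [Multiset.count_eq_zero_of_notMem ha]
      exact Nat.zero_le _
  have hfinal : Mc.charpoly.roots
      = (Multiset.range (m+1)).map (fun j : ℕ => ((m:ℂ) - 2*(j:ℂ)) * I) := by
    refine (Multiset.eq_of_le_of_card_le hle ?_).symm
    rw [hcardR, hdeg]
    simp
  rw [hfinal]
  simp [Multiset.map_map, Function.comp]
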